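/- Let 𝕜 be ℝ or ℂ, V an inner product space over 𝕜, and φ : V →ₗ[𝕜] V a finite potent endomorphism with index at most 1 (IsCompl (LinearMap.range φ) (LinearMap.ker φ)). If ψ : V →ₗ[𝕜] V is a Moore–Penrose inverse of φ and χ : V →ₗ[𝕜] V is a group inverse of φ, then the composition χ ∘ φ ∘ ψ is a core inverse of φ: for every v ∈ V, v - φ ((χ ∘ φ ∘ ψ) v) ∈ (LinearMap.range φ)ᗮ, and LinearMap.range (χ ∘ φ ∘ ψ) ≤ LinearMap.range φ. -/

import Mathlib

theorem core_stmt4 {𝕜 : Type*} [RCLike 𝕜] {V : Type*} [NormedAddCommGroup V]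
    [InnerProductSpace 𝕜 V] (φ ψ χ : V →ₗ[𝕜] V)
    (hfp : ∃ n : ℕ, FiniteDimensional 𝕜 (LinearMap.range (φ ^ n)))
    (hidx : IsCompl (LinearMap.range φ) (LinearMap.ker φ))
    (hmp1 : φ ∘ₗ ψ ∘ₗ φ = φ)
    (hmp2 : ψ ∘ₗ φ ∘ₗ ψ = ψ)
    (hmp3 : ∀ u w : V, (inner 𝕜 ((φ ∘ₗ ψ) u) w : 𝕜) = inner 𝕜 u ((φ ∘ₗ ψ) w))
    (hmp4 : ∀ u w : V, (inner 𝕜 ((ψ ∘ₗ φ) u) w : 𝕜) = inner 𝕜 u ((ψ ∘ₗ φ) w))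
    (hg1 : φ ∘ₗ χ ∘ₗ φ = φ)
    (hg2 : χ ∘ₗ φ ∘ₗ χ = χ)
    (hg3 : φ ∘ₗ χ = χ ∘ₗ φ) :
    (∀ v : V, v - φ ((χ ∘ₗ φ ∘ₗ ψ) v) ∈ (LinearMap.range φ)ᗮ) ∧
      LinearMap.range (χ ∘ₗ φ ∘ₗ ψ) ≤ LinearMap.range φ := by
  constructor
  · intro v
    rw [Submodule.mem_orthogonal]
    rintro _ ⟨u, rfl⟩
    have key : φ ((χ ∘ₗ φ ∘ₗ ψ) v) = φ (ψ v) := by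
      have : (φ ∘ₗ χ ∘ₗ φ) (ψ v) = φ (ψ v) := by rw [hg1]
      simpa using this
    rw [key, inner_sub_right]
    have h := hmp3 (φ u) v
    have h2 : (φ ∘ₗ ψ) (φ u) = φ u := by
      have : (φ ∘ₗ ψ ∘ₗ φ) u = φ u := by rw [hmp1]
      simpa using this
    rw [h2] at h
    simp only [LinearMap.comp_apply] at h ⊢
    rw [← h, sub_self]
  · intro x hx
    obtain ⟨u, rfl⟩ := hx
    have hχ : χ ((φ ∘ₗ ψ) u) = φ (χ (χ ((φ ∘ₗ ψ) u))) := by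
      conv_lhs => rw [← hg2]
      have := congrArg (fun f => f (χ ((φ ∘ₗ ψ) u))) hg3
      simp only [LinearMap.comp_apply] at this ⊢
      rw [← this]
    exact ⟨χ (χ ((φ ∘ₗ ψ) u)), by simpa using hχ.symm⟩
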